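/- For a Banach bundle ρ: B ↠ X and any subset Y ⊆ X, the set C₀^ρ(Y) of sections supported in Y, continuous at every point of Y, and with compact δ-supports for all δ > 0, is a closed subspace of the Banach space of bounded sections with the supremum norm. -/

import Mathlib

open Filter Topology
open scoped ENNReal NNReal

/-- Transport along an equality of base points between fibres. -/
def castE {X : Type*} {E : X → Type*} {α β : X} (h : α = β) (a : E α) : E β := h ▸ a

/-- A Banach bundle over a topological space `X`: the fibres `E x` are complex
Banach spaces, the (open continuous) projection is `Sigma.fst` on the total
space `Σ x, E x`, scalar multiplication and (fibrewise) addition are continuous,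
the norm is upper semicontinuous, and nets whose norms tend to `0` over base
points converging to `x` converge to `0ₓ`. -/
structure BanachBundle (X : Type*) [TopologicalSpace X] (E : X → Type*)
    [∀ x, NormedAddCommGroup (E x)] [∀ x, NormedSpace ℂ (E x)]
    [∀ x, CompleteSpace (E x)] [TopologicalSpace (Σ x, E x)] : Prop where
  continuous_proj : Continuous (Sigma.fst : (Σ x, E x) → X)
  isOpenMap_proj : IsOpenMap (Sigma.fst : (Σ x, E x) → X)
  continuous_smul : ∀ z : ℂ, Continuous (fun b : Σ x, E x => (⟨b.1, z • b.2⟩ : Σ x, E x))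
  continuous_add : Continuous (fun p : {p : (Σ x, E x) × (Σ x, E x) // p.1.1 = p.2.1} =>
      (⟨p.1.1.1, p.1.1.2 + castE p.2.symm p.1.2.2⟩ : Σ x, E x))
  usc_norm : UpperSemicontinuous (fun b : Σ x, E x => ‖b.2‖)
  zero_lim : ∀ (l : Filter (Σ x, E x)) (x : X), Tendsto Sigma.fst l (𝓝 x) →
      Tendsto (fun b : Σ x, E x => ‖b.2‖) l (𝓝 (0 : ℝ)) →
      l ≤ 𝓝 (⟨x, 0⟩ : Σ x, E x)

variable {X : Type*} [TopologicalSpace X] {E : X → Type*}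
  [∀ x, NormedAddCommGroup (E x)] [∀ x, NormedSpace ℂ (E x)]
  [∀ x, CompleteSpace (E x)] [TopologicalSpace (Σ x, E x)]

/-- Membership in `C₀^ρ(Y)`: a section supported in `Y`, continuous at every
point of `Y`, all of whose `δ`-supports are compact. -/
def MemC0 (Y : Set X) (a : ∀ x, E x) : Prop :=
  {x | a x ≠ 0} ⊆ Y ∧
  (∀ y ∈ Y, ContinuousAt (fun x => (⟨x, a x⟩ : Σ x, E x)) y) ∧
  ∀ δ : ℝ, 0 < δ → IsCompact {x | δ ≤ ‖a x‖}

set_option linter.unusedSectionVars false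

/-- Basic neighborhoods of zero elements. -/
lemma BanachBundle.nhds_zero (B : BanachBundle X E) (y : X) {V : Set (Σ x, E x)}
    (hV : V ∈ 𝓝 (⟨y, 0⟩ : Σ x, E x)) :
    ∃ U ∈ 𝓝 y, ∃ ε > (0:ℝ), ∀ b : Σ x, E x, b.1 ∈ U → ‖b.2‖ < ε → b ∈ V := by
  set l := Filter.comap Sigma.fst (𝓝 y) ⊓
    Filter.comap (fun b : Σ x, E x => ‖b.2‖) (𝓝 (0:ℝ)) with hl
  have h1 : Tendsto Sigma.fst l (𝓝 y) := tendsto_comap.mono_left inf_le_left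
  have h2 : Tendsto (fun b : Σ x, E x => ‖b.2‖) l (𝓝 (0:ℝ)) :=
    tendsto_comap.mono_left inf_le_right
  have hmem : V ∈ l := B.zero_lim l y h1 h2 hV
  rw [hl, Filter.mem_inf_iff] at hmem
  obtain ⟨t₁, ht₁, t₂, ht₂, hVeq⟩ := hmem
  obtain ⟨U, hU, hUsub⟩ := Filter.mem_comap.mp ht₁
  obtain ⟨T, hT, hTsub⟩ := Filter.mem_comap.mp ht₂
  obtain ⟨ε, hε, hball⟩ := Metric.mem_nhds_iff.mp hT
  refine ⟨U, hU, ε, hε, fun b hb1 hb2 => ?_⟩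
  rw [hVeq]
  refine ⟨hUsub hb1, hTsub (hball ?_)⟩
  rw [Metric.mem_ball, Real.dist_eq, sub_zero, abs_of_nonneg (norm_nonneg _)]
  exact hb2

/-- The zero section is continuous. -/
lemma BanachBundle.contAt_zero (B : BanachBundle X E) (y : X) :
    ContinuousAt (fun x => (⟨x, (0 : E x)⟩ : Σ x, E x)) y := by
  refine B.zero_lim (Filter.map (fun x => (⟨x, (0 : E x)⟩ : Σ x, E x)) (𝓝 y)) y ?_ ?_
  · rw [tendsto_map'_iff]; exact tendsto_id
  · rw [tendsto_map'_iff]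
    have : ((fun b : Σ x, E x => ‖b.2‖) ∘ fun x => (⟨x, (0 : E x)⟩ : Σ x, E x)) =
        fun _ : X => (0:ℝ) := by funext x; simp [Function.comp]
    rw [this]
    exact tendsto_const_nhds

/-- Sum of continuous-at sections is continuous-at. -/
lemma BanachBundle.contAt_add (B : BanachBundle X E) {a b : ∀ x, E x} {y : X}
    (ha : ContinuousAt (fun x => (⟨x, a x⟩ : Σ x, E x)) y)
    (hb : ContinuousAt (fun x => (⟨x, b x⟩ : Σ x, E x)) y) :
    ContinuousAt (fun x => (⟨x, a x + b x⟩ : Σ x, E x)) y := by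
  have hpair : ContinuousAt (fun x =>
      (⟨(⟨x, a x⟩, ⟨x, b x⟩), rfl⟩ : {p : (Σ x, E x) × (Σ x, E x) // p.1.1 = p.2.1})) y := by
    rw [ContinuousAt, tendsto_subtype_rng]
    exact ha.prodMk hb
  exact (B.continuous_add.continuousAt).comp hpair

lemma BanachBundle.contAt_smul (B : BanachBundle X E) (z : ℂ) {a : ∀ x, E x} {y : X}
    (ha : ContinuousAt (fun x => (⟨x, a x⟩ : Σ x, E x)) y) :
    ContinuousAt (fun x => (⟨x, z • a x⟩ : Σ x, E x)) y :=
  ((B.continuous_smul z).continuousAt).comp ha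

/-- In-fibre convergence implies total-space convergence. -/
lemma BanachBundle.tendsto_fiber (B : BanachBundle X E) {ι : Type*} {l : Filter ι} {y : X}
    {v : ι → E y} {w : E y} (h : Tendsto v l (𝓝 w)) :
    Tendsto (fun i => (⟨y, v i⟩ : Σ x, E x)) l (𝓝 (⟨y, w⟩ : Σ x, E x)) := by
  have h0 : Tendsto (fun i => (⟨y, v i - w⟩ : Σ x, E x)) l (𝓝 (⟨y, (0:E y)⟩ : Σ x, E x)) := by
    refine B.zero_lim (Filter.map (fun i => (⟨y, v i - w⟩ : Σ x, E x)) l) y ?_ ?_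
    · rw [tendsto_map'_iff]
      exact tendsto_const_nhds
    · rw [tendsto_map'_iff]
      exact tendsto_iff_norm_sub_tendsto_zero.mp h
  have hpair : Tendsto (fun i =>
      (⟨(⟨y, v i - w⟩, ⟨y, w⟩), rfl⟩ : {p : (Σ x, E x) × (Σ x, E x) // p.1.1 = p.2.1})) l
      (𝓝 (⟨(⟨y, (0:E y)⟩, ⟨y, w⟩), rfl⟩ : {p : (Σ x, E x) × (Σ x, E x) // p.1.1 = p.2.1})) := by
    rw [tendsto_subtype_rng]
    exact h0.prodMk_nhds tendsto_const_nhds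
  have hadd : Tendsto (fun p : {p : (Σ x, E x) × (Σ x, E x) // p.1.1 = p.2.1} =>
      (⟨p.1.1.1, p.1.1.2 + castE p.2.symm p.1.2.2⟩ : Σ x, E x))
      (𝓝 (⟨(⟨y, (0:E y)⟩, ⟨y, w⟩), rfl⟩ : {p : (Σ x, E x) × (Σ x, E x) // p.1.1 = p.2.1}))
      (𝓝 (⟨y, (0:E y) + w⟩ : Σ x, E x)) := B.continuous_add.continuousAt
  have := hadd.comp hpair
  have heq : ((fun p : {p : (Σ x, E x) × (Σ x, E x) // p.1.1 = p.2.1} =>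
      (⟨p.1.1.1, p.1.1.2 + castE p.2.symm p.1.2.2⟩ : Σ x, E x)) ∘
      (fun i => (⟨(⟨y, v i - w⟩, ⟨y, w⟩), rfl⟩ :
        {p : (Σ x, E x) × (Σ x, E x) // p.1.1 = p.2.1}))) =
      fun i => (⟨y, v i⟩ : Σ x, E x) := by
    funext i
    show (⟨y, v i - w + castE rfl w⟩ : Σ x, E x) = ⟨y, v i⟩
    rw [show castE (rfl : y = y) w = w from rfl, sub_add_cancel]
  have heq2 : (⟨y, (0:E y) + w⟩ : Σ x, E x) = ⟨y, w⟩ := by rw [zero_add]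
  rwa [heq, heq2] at this

/-- usc of the pointwise norm at continuity points. -/
lemma BanachBundle.usc_at (B : BanachBundle X E) {a : ∀ x, E x} {y : X}
    (ha : ContinuousAt (fun x => (⟨x, a x⟩ : Σ x, E x)) y) {c : ℝ} (hc : ‖a y‖ < c) :
    ∀ᶠ x in 𝓝 y, ‖a x‖ < c :=
  ha.eventually (B.usc_norm ⟨y, a y⟩ c hc)

/-- Compactness criterion for δ-supports. -/
lemma BanachBundle.compact_aux (B : BanachBundle X E) {a : ∀ x, E x} {K : Set X} {δ : ℝ}
    (hK : IsCompact K) (hsub : {x | δ ≤ ‖a x‖} ⊆ K)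
    (hcont : ∀ x ∈ K, ContinuousAt (fun x => (⟨x, a x⟩ : Σ x, E x)) x) :
    IsCompact {x | δ ≤ ‖a x‖} := by
  have h1 : {x | δ ≤ ‖a x‖} = K ∩ closure {x | δ ≤ ‖a x‖} := by
    apply Set.Subset.antisymm
    · exact fun x hx => ⟨hsub hx, subset_closure hx⟩
    · rintro x ⟨hxK, hxc⟩
      by_contra h
      simp only [Set.mem_setOf_eq, not_le] at h
      have hev := B.usc_at (hcont x hxK) h
      obtain ⟨x', hx'1, hx'2⟩ := mem_closure_iff_nhds.mp hxc _ hev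
      have : δ ≤ ‖a x'‖ := hx'2
      exact not_le.mpr hx'1 this
  rw [h1]
  exact hK.inter_right isClosed_closure

lemma stmt9_ne_zero_of_norm_ge {G : Type*} [NormedAddCommGroup G] {v : G} {δ : ℝ}
    (hδ : 0 < δ) (h : δ ≤ ‖v‖) : v ≠ 0 := by
  intro h0; rw [h0, norm_zero] at h; linarith

lemma stmt9_sup_small {u : ℕ → ∀ x, E x} {a : ∀ x, E x}
    (h : Tendsto (fun n => ⨆ x, (‖u n x - a x‖₊ : ℝ≥0∞)) atTop (𝓝 0)) {ε : ℝ} (hε : 0 < ε) :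
    ∀ᶠ n in atTop, ∀ x, ‖u n x - a x‖ < ε := by
  have h2 := ENNReal.tendsto_nhds_zero.mp h (ENNReal.ofReal (ε/2))
    (ENNReal.ofReal_pos.mpr (by linarith))
  filter_upwards [h2] with n hn x
  have h3 : (‖u n x - a x‖₊ : ℝ≥0∞) ≤ ENNReal.ofReal (ε/2) :=
    le_trans (le_iSup (fun x => (‖u n x - a x‖₊ : ℝ≥0∞)) x) hn
  rw [← ENNReal.ofReal_coe_nnreal, coe_nnnorm,
    ENNReal.ofReal_le_ofReal_iff (by linarith)] at h3
  linarith

lemma stmt9_pt_tendsto {u : ℕ → ∀ x, E x} {a : ∀ x, E x}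
    (h : Tendsto (fun n => ⨆ x, (‖u n x - a x‖₊ : ℝ≥0∞)) atTop (𝓝 0)) (x : X) :
    Tendsto (fun n => u n x) atTop (𝓝 (a x)) := by
  rw [tendsto_iff_norm_sub_tendsto_zero, NormedAddCommGroup.tendsto_nhds_zero]
  intro ε hε
  filter_upwards [stmt9_sup_small h hε] with n hn
  rw [Real.norm_eq_abs, abs_of_nonneg (norm_nonneg _)]
  exact hn x

theorem stmt9 (B : BanachBundle X E) (Y : Set X) :
    (∀ a : ∀ x, E x, MemC0 Y a → BddAbove (Set.range fun x => ‖a x‖)) ∧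
    (∀ a b : ∀ x, E x, MemC0 Y a → MemC0 Y b → MemC0 Y (fun x => a x + b x)) ∧
    (∀ (z : ℂ) (a : ∀ x, E x), MemC0 Y a → MemC0 Y (fun x => z • a x)) ∧
    (∀ (u : ℕ → ∀ x, E x) (a : ∀ x, E x), (∀ n, MemC0 Y (u n)) →
      Tendsto (fun n => ⨆ x, (‖u n x - a x‖₊ : ℝ≥0∞)) atTop (𝓝 0) →
      MemC0 Y a) := by
  refine ⟨?_, ?_, ?_, ?_⟩
  · -- boundedness
    rintro a ⟨hsupp, hcont, hcomp⟩
    have hK : IsCompact {x | 1 ≤ ‖a x‖} := hcomp 1 one_pos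
    have hKY : {x | 1 ≤ ‖a x‖} ⊆ Y := fun x hx =>
      hsupp (stmt9_ne_zero_of_norm_ge one_pos hx)
    obtain ⟨t, _, hcover⟩ := hK.elim_nhds_subcover (fun x => {x' | ‖a x'‖ < ‖a x‖ + 1})
      (fun x hx => B.usc_at (hcont x (hKY hx)) (lt_add_one _))
    refine ⟨1 + ∑ x ∈ t, (‖a x‖ + 1), ?_⟩
    rintro r ⟨x', rfl⟩
    have hsum0 : (0:ℝ) ≤ ∑ x ∈ t, (‖a x‖ + 1) :=
      Finset.sum_nonneg (fun i _ => by positivity)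
    by_cases hx' : 1 ≤ ‖a x'‖
    · obtain ⟨x, hxt, hx'U⟩ := Set.mem_iUnion₂.mp (hcover hx')
      have h1 : ‖a x'‖ < ‖a x‖ + 1 := hx'U
      have h2 : ‖a x‖ + 1 ≤ ∑ x ∈ t, (‖a x‖ + 1) :=
        Finset.single_le_sum (f := fun x => ‖a x‖ + 1) (fun i _ => by positivity) hxt
      linarith
    · push_neg at hx'
      linarith
  · -- addition
    rintro a b ⟨haY, haC, haK⟩ ⟨hbY, hbC, hbK⟩
    refine ⟨?_, fun y hy => B.contAt_add (haC y hy) (hbC y hy), ?_⟩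
    · intro x hx
      by_contra hxY
      have h1 : a x = 0 := by by_contra h; exact hxY (haY h)
      have h2 : b x = 0 := by by_contra h; exact hxY (hbY h)
      exact hx (by simp [Set.mem_setOf_eq, h1, h2])
    · intro δ hδ
      have hK : IsCompact ({x | δ/2 ≤ ‖a x‖} ∪ {x | δ/2 ≤ ‖b x‖}) :=
        (haK _ (by linarith)).union (hbK _ (by linarith))
      refine B.compact_aux hK ?_ ?_
      · intro x hx
        simp only [Set.mem_setOf_eq] at hx
        by_contra h
        simp only [Set.mem_union, Set.mem_setOf_eq, not_or, not_le] at h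
        have := norm_add_le (a x) (b x)
        linarith [h.1, h.2]
      · intro x hx
        have hxY : x ∈ Y := by
          rcases hx with hx | hx
          · exact haY (stmt9_ne_zero_of_norm_ge (by linarith) hx)
          · exact hbY (stmt9_ne_zero_of_norm_ge (by linarith) hx)
        exact B.contAt_add (haC x hxY) (hbC x hxY)
  · -- scalar multiplication
    rintro z a ⟨haY, haC, haK⟩
    by_cases hz : z = 0
    · subst hz
      refine ⟨?_, ?_, ?_⟩
      · intro x hx
        exact absurd (zero_smul ℂ (a x)) hx
      · intro y hy
        have heq : (fun x => (⟨x, (0:ℂ) • a x⟩ : Σ x, E x)) =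
            fun x => (⟨x, (0 : E x)⟩ : Σ x, E x) := by
          funext x; rw [zero_smul]
        rw [heq]
        exact B.contAt_zero y
      · intro δ hδ
        have heq : {x | δ ≤ ‖(0:ℂ) • a x‖} = (∅ : Set X) := by
          ext x
          simp only [Set.mem_setOf_eq, zero_smul, norm_zero, Set.mem_empty_iff_false,
            iff_false, not_le]
          linarith
        rw [heq]
        exact isCompact_empty
    · refine ⟨?_, fun y hy => B.contAt_smul z (haC y hy), ?_⟩
      · intro x hx
        refine haY ?_
        intro h0
        exact hx (by simp [Set.mem_setOf_eq, h0])
      · intro δ hδ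
        have hz' : 0 < ‖z‖ := norm_pos_iff.mpr hz
        have hset : {x | δ ≤ ‖z • a x‖} = {x | δ/‖z‖ ≤ ‖a x‖} := by
          ext x
          simp only [Set.mem_setOf_eq, norm_smul]
          rw [div_le_iff₀' hz']
        rw [hset]
        exact haK _ (div_pos hδ hz')
  · -- uniform limits
    rintro u a hu hlim
    have hpt : ∀ x, Tendsto (fun n => u n x) atTop (𝓝 (a x)) := stmt9_pt_tendsto hlim
    have hsuppY : {x | a x ≠ 0} ⊆ Y := by
      intro x hx
      by_contra hxY
      have hux : ∀ n, u n x = 0 := fun n => by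
        by_contra h; exact hxY ((hu n).1 h)
      have h0 : a x = 0 := by
        have h := hpt x
        simp only [hux] at h
        exact tendsto_nhds_unique h tendsto_const_nhds
      exact hx h0
    have hcont : ∀ y ∈ Y, ContinuousAt (fun x => (⟨x, a x⟩ : Σ x, E x)) y := by
      intro y hy
      rw [ContinuousAt, Filter.tendsto_def]
      intro N hN
      have hNadd : N ∈ 𝓝 (⟨y, a y + castE (rfl : y = y) (0 : E y)⟩ : Σ x, E x) := by
        have heq : (⟨y, a y + castE (rfl : y = y) (0 : E y)⟩ : Σ x, E x) = ⟨y, a y⟩ := by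
          rw [show castE (rfl : y = y) (0 : E y) = 0 from rfl, add_zero]
        rw [heq]; exact hN
      have hadd : ContinuousAt (fun p : {p : (Σ x, E x) × (Σ x, E x) // p.1.1 = p.2.1} =>
          (⟨p.1.1.1, p.1.1.2 + castE p.2.symm p.1.2.2⟩ : Σ x, E x))
          (⟨(⟨y, a y⟩, ⟨y, (0 : E y)⟩), rfl⟩) := B.continuous_add.continuousAt
      have hpre := hadd.preimage_mem_nhds hNadd
      rw [nhds_subtype_eq_comap, Filter.mem_comap] at hpre
      obtain ⟨W, hW, hWsub⟩ := hpre
      rw [mem_nhds_prod_iff] at hW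
      obtain ⟨V₁, hV₁, V₂, hV₂, hVsub⟩ := hW
      obtain ⟨O, hOsub, hOopen, hOmem⟩ := mem_nhds_iff.mp hV₁
      obtain ⟨U, hU, ε, hε, hball⟩ := B.nhds_zero y hV₂
      have hev1 : ∀ᶠ n in atTop, (⟨y, u n y⟩ : Σ x, E x) ∈ O :=
        (B.tendsto_fiber (hpt y)).eventually (hOopen.eventually_mem hOmem)
      have hev2 : ∀ᶠ n in atTop, ∀ x, ‖u n x - a x‖ < ε := stmt9_sup_small hlim hε
      obtain ⟨n, hn1, hn2⟩ := (hev1.and hev2).exists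
      have hUO : {x | (⟨x, u n x⟩ : Σ x, E x) ∈ O} ∈ 𝓝 y :=
        ((hu n).2.1 y hy).preimage_mem_nhds (hOopen.mem_nhds hn1)
      filter_upwards [hU, hUO] with x hx1 hx2
      have hmem : ((⟨x, u n x⟩, ⟨x, a x - u n x⟩) : (Σ x, E x) × (Σ x, E x)) ∈ W := by
        apply hVsub
        refine ⟨hOsub hx2, hball _ hx1 ?_⟩
        show ‖a x - u n x‖ < ε
        rw [norm_sub_rev]
        exact hn2 x
      have hW' : (⟨(⟨x, u n x⟩, ⟨x, a x - u n x⟩), rfl⟩ :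
          {p : (Σ x, E x) × (Σ x, E x) // p.1.1 = p.2.1}) ∈ Subtype.val ⁻¹' W := hmem
      have hN' := hWsub hW'
      have heq : (⟨x, u n x + castE (rfl : x = x) (a x - u n x)⟩ : Σ x, E x) =
          ⟨x, a x⟩ := by
        rw [show castE (rfl : x = x) (a x - u n x) = a x - u n x from rfl, add_sub_cancel]
      have : (⟨x, u n x + castE (rfl : x = x) (a x - u n x)⟩ : Σ x, E x) ∈ N := hN'
      rwa [heq] at this
    refine ⟨hsuppY, hcont, ?_⟩
    intro δ hδ
    obtain ⟨n, hn⟩ := (stmt9_sup_small hlim (show (0:ℝ) < δ/4 by linarith)).exists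
    have hK := (hu n).2.2 (δ/2) (by linarith)
    refine B.compact_aux hK ?_ ?_
    · intro x hx
      simp only [Set.mem_setOf_eq] at hx ⊢
      have h1 : ‖a x - u n x‖ < δ/4 := by rw [norm_sub_rev]; exact hn x
      have h2 : ‖a x‖ ≤ ‖u n x‖ + ‖a x - u n x‖ := by
        calc ‖a x‖ = ‖u n x + (a x - u n x)‖ := by rw [add_sub_cancel]
        _ ≤ ‖u n x‖ + ‖a x - u n x‖ := norm_add_le _ _
      linarith
    · intro x hxK
      have hxK' : δ/2 ≤ ‖u n x‖ := hxK
      exact hcont x ((hu n).1 (stmt9_ne_zero_of_norm_ge (by linarith) hxK'))
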